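/- Closed form of the Kullback-Leibler divergence between two labeled multi-Bernoullis (discrete attribute space): with the setup as for LMBs with r_i(ℓ) ∈ [0,1) and f_i = r_i p_i/(1−r_i), D_KL(π₁‖π₂) = Σ_{ℓ∈𝕃} [ ln((1−r₁(ℓ))/(1−r₂(ℓ))) + (1−r₁(ℓ))·Σ_x f₁(x,ℓ)·ln(f₁(x,ℓ)/f₂(x,ℓ)) ], where D_KL(π₁‖π₂) = Σ_{L⊆𝕃} Σ over attribute assignments of π₁·ln(π₁/π₂), with the convention 0·ln 0 = 0. -/

import Mathlib

private lemma auxSumProd {𝕃 X : Type*} [Fintype X] [DecidableEq 𝕃] (L : Finset 𝕃)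
    (h : {a // a ∈ L} → X → ℝ) :
    ∑ x : {a // a ∈ L} → X, ∏ ℓ ∈ L.attach, h ℓ (x ℓ) = ∏ ℓ ∈ L.attach, ∑ y : X, h ℓ y := by
  classical
  rw [← Finset.univ_eq_attach, Finset.prod_univ_sum (fun _ => (Finset.univ : Finset X)) h,
    Fintype.piFinset_univ]

private lemma auxProdAdd {𝕃 : Type*} [Fintype 𝕃] [DecidableEq 𝕃] (g : 𝕃 → ℝ) :
    ∑ L : Finset 𝕃, ∏ ℓ ∈ L, g ℓ = ∏ ℓ : 𝕃, (1 + g ℓ) := by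
  have h := Finset.prod_add g (fun _ => (1:ℝ)) (Finset.univ : Finset 𝕃)
  simp only [Finset.prod_const_one, mul_one, Finset.powerset_univ] at h
  rw [← h]
  exact Finset.prod_congr rfl fun ℓ _ => add_comm _ _

private lemma auxSumContaining {𝕃 : Type*} [Fintype 𝕃] [DecidableEq 𝕃] (g u : 𝕃 → ℝ) (ℓ₀ : 𝕃) :
    ∑ L : Finset 𝕃, (if ℓ₀ ∈ L then ∏ ℓ' ∈ L, (if ℓ' = ℓ₀ then u ℓ' else g ℓ') else 0)
    = u ℓ₀ * ∏ ℓ' ∈ Finset.univ.erase ℓ₀, (1 + g ℓ') := by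
  classical
  have hpt : ∀ L : Finset 𝕃, (if ℓ₀ ∈ L then ∏ ℓ' ∈ L, (if ℓ' = ℓ₀ then u ℓ' else g ℓ') else 0)
      = (∏ ℓ' ∈ L, (if ℓ' = ℓ₀ then u ℓ' else g ℓ'))
        - ∏ ℓ' ∈ L, (if ℓ' = ℓ₀ then 0 else g ℓ') := by
    intro L
    by_cases h : ℓ₀ ∈ L
    · have hz : (∏ ℓ' ∈ L, if ℓ' = ℓ₀ then (0:ℝ) else g ℓ') = 0 :=
        Finset.prod_eq_zero h (if_pos rfl)
      rw [if_pos h, hz]; ring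
    · rw [if_neg h]
      have e1 : ∏ ℓ' ∈ L, (if ℓ' = ℓ₀ then u ℓ' else g ℓ') = ∏ ℓ' ∈ L, g ℓ' :=
        Finset.prod_congr rfl fun ℓ' hℓ' => if_neg fun (he : ℓ' = ℓ₀) => h (he ▸ hℓ')
      have e2 : ∏ ℓ' ∈ L, (if ℓ' = ℓ₀ then (0:ℝ) else g ℓ') = ∏ ℓ' ∈ L, g ℓ' :=
        Finset.prod_congr rfl fun ℓ' hℓ' => if_neg fun (he : ℓ' = ℓ₀) => h (he ▸ hℓ')
      rw [e1, e2]; ring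
  rw [Finset.sum_congr rfl fun L _ => hpt L, Finset.sum_sub_distrib, auxProdAdd, auxProdAdd,
    ← Finset.mul_prod_erase Finset.univ (fun ℓ' => 1 + if ℓ' = ℓ₀ then u ℓ' else g ℓ')
      (Finset.mem_univ ℓ₀),
    ← Finset.mul_prod_erase Finset.univ (fun ℓ' => 1 + if ℓ' = ℓ₀ then (0:ℝ) else g ℓ')
      (Finset.mem_univ ℓ₀)]
  have e3 : ∏ ℓ' ∈ Finset.univ.erase ℓ₀, (1 + if ℓ' = ℓ₀ then u ℓ' else g ℓ')
      = ∏ ℓ' ∈ Finset.univ.erase ℓ₀, (1 + g ℓ') :=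
    Finset.prod_congr rfl fun ℓ' hℓ' => by rw [if_neg (Finset.ne_of_mem_erase hℓ')]
  have e4 : ∏ ℓ' ∈ Finset.univ.erase ℓ₀, (1 + if ℓ' = ℓ₀ then (0:ℝ) else g ℓ')
      = ∏ ℓ' ∈ Finset.univ.erase ℓ₀, (1 + g ℓ') :=
    Finset.prod_congr rfl fun ℓ' hℓ' => by rw [if_neg (Finset.ne_of_mem_erase hℓ')]
  simp only [e3, e4, if_pos rfl, if_true]
  ring

private lemma auxPointwise {𝕃 X : Type*} [DecidableEq 𝕃] (C₁ C₂ : ℝ) (hC₁ : 0 < C₁) (hC₂ : 0 < C₂)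
    (f₁ f₂ : X → 𝕃 → ℝ)
    (habs : ∀ x ℓ, f₂ x ℓ = 0 → f₁ x ℓ = 0)
    (L : Finset 𝕃) (x : {a // a ∈ L} → X) :
    (C₁ * ∏ ℓ ∈ L.attach, f₁ (x ℓ) ℓ.1) *
      Real.log ((C₁ * ∏ ℓ ∈ L.attach, f₁ (x ℓ) ℓ.1) / (C₂ * ∏ ℓ ∈ L.attach, f₂ (x ℓ) ℓ.1))
    = (C₁ * ∏ ℓ ∈ L.attach, f₁ (x ℓ) ℓ.1) * Real.log (C₁ / C₂)
      + C₁ * ∑ ℓ ∈ L.attach, ∏ ℓ' ∈ L.attach,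
          (if ℓ' = ℓ then f₁ (x ℓ') ℓ'.1 * Real.log (f₁ (x ℓ') ℓ'.1 / f₂ (x ℓ') ℓ'.1)
           else f₁ (x ℓ') ℓ'.1) := by
  classical
  by_cases hz : ∃ ℓ₀ ∈ L.attach, f₁ (x ℓ₀) ℓ₀.1 = 0
  · obtain ⟨ℓ₀, hℓ₀, h0⟩ := hz
    have hP : (∏ ℓ ∈ L.attach, f₁ (x ℓ) ℓ.1) = 0 := Finset.prod_eq_zero hℓ₀ h0
    rw [hP]
    have : ∀ ℓ ∈ L.attach, (∏ ℓ' ∈ L.attach,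
        (if ℓ' = ℓ then f₁ (x ℓ') ℓ'.1 * Real.log (f₁ (x ℓ') ℓ'.1 / f₂ (x ℓ') ℓ'.1)
         else f₁ (x ℓ') ℓ'.1)) = 0 := by
      intro ℓ _
      refine Finset.prod_eq_zero hℓ₀ ?_
      by_cases h : ℓ₀ = ℓ
      · subst h; simp [h0]
      · simp [h, h0]
    rw [Finset.sum_congr rfl this]
    simp
  · push_neg at hz
    have h1ne : ∀ ℓ ∈ L.attach, f₁ (x ℓ) ℓ.1 ≠ 0 := hz
    have h2ne : ∀ ℓ ∈ L.attach, f₂ (x ℓ) ℓ.1 ≠ 0 := fun ℓ hℓ h => h1ne ℓ hℓ (habs _ _ h)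
    have hP1 : (∏ ℓ ∈ L.attach, f₁ (x ℓ) ℓ.1) ≠ 0 := Finset.prod_ne_zero_iff.mpr h1ne
    have hP2 : (∏ ℓ ∈ L.attach, f₂ (x ℓ) ℓ.1) ≠ 0 := Finset.prod_ne_zero_iff.mpr h2ne
    have hlog : Real.log ((C₁ * ∏ ℓ ∈ L.attach, f₁ (x ℓ) ℓ.1) /
        (C₂ * ∏ ℓ ∈ L.attach, f₂ (x ℓ) ℓ.1))
        = Real.log (C₁ / C₂) + ∑ ℓ ∈ L.attach,
            Real.log (f₁ (x ℓ) ℓ.1 / f₂ (x ℓ) ℓ.1) := by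
      have hsum : ∑ ℓ ∈ L.attach, Real.log (f₁ (x ℓ) ℓ.1 / f₂ (x ℓ) ℓ.1)
          = (∑ ℓ ∈ L.attach, Real.log (f₁ (x ℓ) ℓ.1))
            - ∑ ℓ ∈ L.attach, Real.log (f₂ (x ℓ) ℓ.1) := by
        rw [← Finset.sum_sub_distrib]
        exact Finset.sum_congr rfl fun ℓ hℓ => Real.log_div (h1ne ℓ hℓ) (h2ne ℓ hℓ)
      rw [Real.log_div (by positivity) (mul_ne_zero hC₂.ne' hP2),
        Real.log_mul hC₁.ne' hP1, Real.log_mul hC₂.ne' hP2,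
        Real.log_prod h1ne, Real.log_prod h2ne,
        Real.log_div hC₁.ne' hC₂.ne', hsum]
      ring
    have key : ∀ ℓ ∈ L.attach, (∏ ℓ' ∈ L.attach,
        (if ℓ' = ℓ then f₁ (x ℓ') ℓ'.1 * Real.log (f₁ (x ℓ') ℓ'.1 / f₂ (x ℓ') ℓ'.1)
         else f₁ (x ℓ') ℓ'.1))
        = (∏ ℓ' ∈ L.attach, f₁ (x ℓ') ℓ'.1) * Real.log (f₁ (x ℓ) ℓ.1 / f₂ (x ℓ) ℓ.1) := by
      intro ℓ hℓ
      rw [← Finset.mul_prod_erase _ _ hℓ, ← Finset.mul_prod_erase _ (fun ℓ' => f₁ (x ℓ') ℓ'.1) hℓ]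
      have he : ∏ ℓ' ∈ L.attach.erase ℓ,
          (if ℓ' = ℓ then f₁ (x ℓ') ℓ'.1 * Real.log (f₁ (x ℓ') ℓ'.1 / f₂ (x ℓ') ℓ'.1)
           else f₁ (x ℓ') ℓ'.1) = ∏ ℓ' ∈ L.attach.erase ℓ, f₁ (x ℓ') ℓ'.1 :=
        Finset.prod_congr rfl fun ℓ' hℓ' => if_neg (Finset.ne_of_mem_erase hℓ')
      rw [he, if_pos rfl]
      ring
    rw [hlog, mul_add, Finset.sum_congr rfl key]
    congr 1
    rw [Finset.mul_sum, Finset.mul_sum]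
    exact Finset.sum_congr rfl fun ℓ _ => by ring

/-- Closed form of the Kullback-Leibler divergence between two labeled
multi-Bernoullis (discrete attribute space). -/
theorem lmb_kl_divergence_closed_form
    {𝕃 X : Type*} [Fintype 𝕃] [DecidableEq 𝕃] [Fintype X]
    (r₁ r₂ : 𝕃 → ℝ) (p₁ p₂ : X → 𝕃 → ℝ)
    (hr₁0 : ∀ ℓ, 0 ≤ r₁ ℓ) (hr₁1 : ∀ ℓ, r₁ ℓ < 1)
    (hr₂0 : ∀ ℓ, 0 ≤ r₂ ℓ) (hr₂1 : ∀ ℓ, r₂ ℓ < 1)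
    (hp₁0 : ∀ x ℓ, 0 ≤ p₁ x ℓ) (hp₁1 : ∀ ℓ, ∑ x : X, p₁ x ℓ = 1)
    (hp₂0 : ∀ x ℓ, 0 ≤ p₂ x ℓ) (hp₂1 : ∀ ℓ, ∑ x : X, p₂ x ℓ = 1)
    (f₁ f₂ : X → 𝕃 → ℝ)
    (hf₁ : ∀ x ℓ, f₁ x ℓ = r₁ ℓ * p₁ x ℓ / (1 - r₁ ℓ))
    (hf₂ : ∀ x ℓ, f₂ x ℓ = r₂ ℓ * p₂ x ℓ / (1 - r₂ ℓ))
    (habs : ∀ x ℓ, f₂ x ℓ = 0 → f₁ x ℓ = 0) :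
    ∑ L : Finset 𝕃, ∑ x : {a // a ∈ L} → X,
        ((∏ ℓ : 𝕃, (1 - r₁ ℓ)) * ∏ ℓ ∈ L.attach, f₁ (x ℓ) ℓ.1) *
          Real.log
            (((∏ ℓ : 𝕃, (1 - r₁ ℓ)) * ∏ ℓ ∈ L.attach, f₁ (x ℓ) ℓ.1) /
              ((∏ ℓ : 𝕃, (1 - r₂ ℓ)) * ∏ ℓ ∈ L.attach, f₂ (x ℓ) ℓ.1))
      = ∑ ℓ : 𝕃,
          (Real.log ((1 - r₁ ℓ) / (1 - r₂ ℓ)) +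
            (1 - r₁ ℓ) * ∑ x : X, f₁ x ℓ * Real.log (f₁ x ℓ / f₂ x ℓ)) := by
  classical
  have h1r₁ : ∀ ℓ, (0:ℝ) < 1 - r₁ ℓ := fun ℓ => by linarith [hr₁1 ℓ]
  have h1r₂ : ∀ ℓ, (0:ℝ) < 1 - r₂ ℓ := fun ℓ => by linarith [hr₂1 ℓ]
  set C₁ := ∏ ℓ : 𝕃, (1 - r₁ ℓ) with hC₁def
  set C₂ := ∏ ℓ : 𝕃, (1 - r₂ ℓ) with hC₂def
  have hC₁pos : 0 < C₁ := Finset.prod_pos fun ℓ _ => h1r₁ ℓ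
  have hC₂pos : 0 < C₂ := Finset.prod_pos fun ℓ _ => h1r₂ ℓ
  set g₁ : 𝕃 → ℝ := fun ℓ => ∑ y : X, f₁ y ℓ with hg₁def
  set SK : 𝕃 → ℝ := fun ℓ => ∑ y : X, f₁ y ℓ * Real.log (f₁ y ℓ / f₂ y ℓ) with hSKdef
  have hfact : ∀ ℓ, (1 - r₁ ℓ) * (1 + g₁ ℓ) = 1 := by
    intro ℓ
    have hg : g₁ ℓ = r₁ ℓ / (1 - r₁ ℓ) := by
      show (∑ y : X, f₁ y ℓ) = r₁ ℓ / (1 - r₁ ℓ)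
      calc ∑ y : X, f₁ y ℓ = ∑ y : X, (r₁ ℓ / (1 - r₁ ℓ)) * p₁ y ℓ :=
            Finset.sum_congr rfl fun y _ => by rw [hf₁]; ring
        _ = (r₁ ℓ / (1 - r₁ ℓ)) * ∑ y : X, p₁ y ℓ := by rw [Finset.mul_sum]
        _ = r₁ ℓ / (1 - r₁ ℓ) := by rw [hp₁1, mul_one]
    rw [hg]
    have hne := (h1r₁ ℓ).ne'
    field_simp
    ring
  have hC₁erase : ∀ ℓ₀, C₁ * ∏ ℓ' ∈ Finset.univ.erase ℓ₀, (1 + g₁ ℓ') = 1 - r₁ ℓ₀ := by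
    intro ℓ₀
    rw [hC₁def, ← Finset.mul_prod_erase Finset.univ (fun ℓ => 1 - r₁ ℓ) (Finset.mem_univ ℓ₀),
      mul_assoc, ← Finset.prod_mul_distrib,
      Finset.prod_congr rfl (fun ℓ' _ => hfact ℓ'), Finset.prod_const_one, mul_one]
  have hC₁tot : C₁ * ∏ ℓ' : 𝕃, (1 + g₁ ℓ') = 1 := by
    rw [hC₁def, ← Finset.prod_mul_distrib,
      Finset.prod_congr rfl (fun ℓ' _ => hfact ℓ'), Finset.prod_const_one]
  -- Step 1: pointwise expansion
  have step1 : ∑ L : Finset 𝕃, ∑ x : {a // a ∈ L} → X,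
      (C₁ * ∏ ℓ ∈ L.attach, f₁ (x ℓ) ℓ.1) *
        Real.log ((C₁ * ∏ ℓ ∈ L.attach, f₁ (x ℓ) ℓ.1) /
          (C₂ * ∏ ℓ ∈ L.attach, f₂ (x ℓ) ℓ.1))
      = (∑ L : Finset 𝕃, ∑ x : {a // a ∈ L} → X,
          (C₁ * ∏ ℓ ∈ L.attach, f₁ (x ℓ) ℓ.1) * Real.log (C₁ / C₂))
        + ∑ L : Finset 𝕃, ∑ x : {a // a ∈ L} → X,
            C₁ * ∑ ℓ ∈ L.attach, ∏ ℓ' ∈ L.attach,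
              (if ℓ' = ℓ then f₁ (x ℓ') ℓ'.1 * Real.log (f₁ (x ℓ') ℓ'.1 / f₂ (x ℓ') ℓ'.1)
               else f₁ (x ℓ') ℓ'.1) := by
    rw [← Finset.sum_add_distrib]
    refine Finset.sum_congr rfl fun L _ => ?_
    rw [← Finset.sum_add_distrib]
    exact Finset.sum_congr rfl fun x _ =>
      auxPointwise C₁ C₂ hC₁pos hC₂pos f₁ f₂ habs L x
  have part1 : (∑ L : Finset 𝕃, ∑ x : {a // a ∈ L} → X,
      (C₁ * ∏ ℓ ∈ L.attach, f₁ (x ℓ) ℓ.1) * Real.log (C₁ / C₂))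
      = ∑ ℓ : 𝕃, Real.log ((1 - r₁ ℓ) / (1 - r₂ ℓ)) := by
    have e : ∀ L : Finset 𝕃, (∑ x : {a // a ∈ L} → X,
        (C₁ * ∏ ℓ ∈ L.attach, f₁ (x ℓ) ℓ.1) * Real.log (C₁ / C₂))
        = (C₁ * Real.log (C₁ / C₂)) * ∏ ℓ ∈ L, g₁ ℓ := by
      intro L
      have e1 : ∑ x : {a // a ∈ L} → X, ∏ ℓ ∈ L.attach, f₁ (x ℓ) ℓ.1
          = ∏ ℓ ∈ L.attach, ∑ y : X, f₁ y ℓ.1 := auxSumProd L (fun ℓ y => f₁ y ℓ.1)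
      calc ∑ x : {a // a ∈ L} → X,
            (C₁ * ∏ ℓ ∈ L.attach, f₁ (x ℓ) ℓ.1) * Real.log (C₁ / C₂)
          = (C₁ * Real.log (C₁ / C₂)) * ∑ x : {a // a ∈ L} → X, ∏ ℓ ∈ L.attach, f₁ (x ℓ) ℓ.1 := by
            rw [Finset.mul_sum]
            exact Finset.sum_congr rfl fun x _ => by ring
        _ = (C₁ * Real.log (C₁ / C₂)) * ∏ ℓ ∈ L, g₁ ℓ := by
            rw [e1]
            congr 1
            exact Finset.prod_attach L g₁
    rw [Finset.sum_congr rfl fun L _ => e L, ← Finset.mul_sum, auxProdAdd g₁]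
    have e2 : (C₁ * Real.log (C₁ / C₂)) * ∏ ℓ : 𝕃, (1 + g₁ ℓ) = Real.log (C₁ / C₂) := by
      calc (C₁ * Real.log (C₁ / C₂)) * ∏ ℓ : 𝕃, (1 + g₁ ℓ)
          = Real.log (C₁ / C₂) * (C₁ * ∏ ℓ : 𝕃, (1 + g₁ ℓ)) := by ring
        _ = Real.log (C₁ / C₂) := by rw [hC₁tot, mul_one]
    rw [e2, hC₁def, hC₂def, ← Finset.prod_div_distrib,
      Real.log_prod fun ℓ _ => div_ne_zero (h1r₁ ℓ).ne' (h1r₂ ℓ).ne']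
  have part2 : (∑ L : Finset 𝕃, ∑ x : {a // a ∈ L} → X,
      C₁ * ∑ ℓ ∈ L.attach, ∏ ℓ' ∈ L.attach,
        (if ℓ' = ℓ then f₁ (x ℓ') ℓ'.1 * Real.log (f₁ (x ℓ') ℓ'.1 / f₂ (x ℓ') ℓ'.1)
         else f₁ (x ℓ') ℓ'.1))
      = ∑ ℓ : 𝕃, (1 - r₁ ℓ) * SK ℓ := by
    have e2 : ∀ L : Finset 𝕃, (∑ x : {a // a ∈ L} → X,
        C₁ * ∑ ℓ ∈ L.attach, ∏ ℓ' ∈ L.attach,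
          (if ℓ' = ℓ then f₁ (x ℓ') ℓ'.1 * Real.log (f₁ (x ℓ') ℓ'.1 / f₂ (x ℓ') ℓ'.1)
           else f₁ (x ℓ') ℓ'.1))
        = C₁ * ∑ ℓ₀ : 𝕃, (if ℓ₀ ∈ L then ∏ ℓ' ∈ L, (if ℓ' = ℓ₀ then SK ℓ' else g₁ ℓ') else 0) := by
      intro L
      rw [← Finset.mul_sum]
      congr 1
      rw [Finset.sum_comm]
      have e3 : ∀ ℓ ∈ L.attach, (∑ x : {a // a ∈ L} → X, ∏ ℓ' ∈ L.attach,
          (if ℓ' = ℓ then f₁ (x ℓ') ℓ'.1 * Real.log (f₁ (x ℓ') ℓ'.1 / f₂ (x ℓ') ℓ'.1)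
           else f₁ (x ℓ') ℓ'.1))
          = ∏ ℓ' ∈ L, (if ℓ' = ℓ.1 then SK ℓ' else g₁ ℓ') := by
        intro ℓ _
        rw [auxSumProd L (fun ℓ' y =>
          if ℓ' = ℓ then f₁ y ℓ'.1 * Real.log (f₁ y ℓ'.1 / f₂ y ℓ'.1) else f₁ y ℓ'.1)]
        have e4 : ∀ ℓ' ∈ L.attach, (∑ y : X,
            if ℓ' = ℓ then f₁ y ℓ'.1 * Real.log (f₁ y ℓ'.1 / f₂ y ℓ'.1) else f₁ y ℓ'.1)
            = (if ℓ'.1 = ℓ.1 then SK ℓ'.1 else g₁ ℓ'.1) := by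
          intro ℓ' _
          by_cases h : ℓ' = ℓ
          · rw [if_pos (congrArg Subtype.val h)]
            simp only [if_pos h]
            rfl
          · rw [if_neg fun he => h (Subtype.ext he)]
            simp only [if_neg h]
            rfl
        rw [Finset.prod_congr rfl e4]
        exact Finset.prod_attach L (fun a => if a = ℓ.1 then SK a else g₁ a)
      rw [Finset.sum_congr rfl e3,
        Finset.sum_attach L (fun a => ∏ ℓ' ∈ L, (if ℓ' = a then SK ℓ' else g₁ ℓ')),
        Finset.sum_ite_mem, Finset.univ_inter]
    rw [Finset.sum_congr rfl fun L _ => e2 L, ← Finset.mul_sum, Finset.sum_comm]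
    rw [Finset.sum_congr rfl fun ℓ₀ _ => auxSumContaining g₁ SK ℓ₀, Finset.mul_sum]
    exact Finset.sum_congr rfl fun ℓ₀ _ => by
      calc C₁ * (SK ℓ₀ * ∏ ℓ' ∈ Finset.univ.erase ℓ₀, (1 + g₁ ℓ'))
          = (C₁ * ∏ ℓ' ∈ Finset.univ.erase ℓ₀, (1 + g₁ ℓ')) * SK ℓ₀ := by ring
        _ = (1 - r₁ ℓ₀) * SK ℓ₀ := by rw [hC₁erase ℓ₀]
  rw [step1, part1, part2, ← Finset.sum_add_distrib]
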